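/- The map R_{α,β}(x,y) = (u,v) with u = y(αx+βy)/(βx+αy), v = x(αx+βy)/(βx+αy) preserves the 2-form ω = (1/x² − 1/y²) dx ∧ dy, i.e. (1/u² − 1/v²)(∂u/∂x ∂v/∂y − ∂u/∂y ∂v/∂x) = 1/x² − 1/y². -/

import Mathlib

/-- First component of the Yang–Baxter map. -/
noncomputable def ufun (α β x y : ℝ) : ℝ := y * (α * x + β * y) / (β * x + α * y)

/-- Second component of the Yang–Baxter map. -/
noncomputable def vfun (α β x y : ℝ) : ℝ := x * (α * x + β * y) / (β * x + α * y)

/-- The map `R_{α,β}` preserves the symplectic form `ω = (1/x² − 1/y²) dx ∧ dy`: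
the Jacobian identity `(1/u² − 1/v²)·(∂u/∂x ∂v/∂y − ∂u/∂y ∂v/∂x) = 1/x² − 1/y²`. -/
theorem collision_symplectic (α β x y : ℝ)
    (hα : 0 < α) (hβ : 0 < β) (hx : 0 < x) (hy : 0 < y) :
    (1 / (ufun α β x y) ^ 2 - 1 / (vfun α β x y) ^ 2) *
      (deriv (fun t => ufun α β t y) x * deriv (fun t => vfun α β x t) y -
       deriv (fun t => ufun α β x t) y * deriv (fun t => vfun α β t y) x) =
    1 / x ^ 2 - 1 / y ^ 2 := by
  have hd : 0 < β * x + α * y := by positivity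
  have hne : β * x + α * y ≠ 0 := ne_of_gt hd
  have hn : 0 < α * x + β * y := by positivity
  -- ∂u/∂x
  have h1 : HasDerivAt (fun t => ufun α β t y)
      ((y * α * (β * x + α * y) - y * (α * x + β * y) * β) / (β * x + α * y) ^ 2) x := by
    have hf : HasDerivAt (fun t : ℝ => y * (α * t + β * y)) (y * α) x := by
      simpa using (((hasDerivAt_id x).const_mul α).add_const (β * y)).const_mul y
    have hg : HasDerivAt (fun t : ℝ => β * t + α * y) β x := by
      simpa using ((hasDerivAt_id x).const_mul β).add_const (α * y)
    exact hf.div hg hne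
  -- ∂v/∂y
  have h2 : HasDerivAt (fun t => vfun α β x t)
      ((x * β * (β * x + α * y) - x * (α * x + β * y) * α) / (β * x + α * y) ^ 2) y := by
    have hf : HasDerivAt (fun t : ℝ => x * (α * x + β * t)) (x * β) y := by
      simpa using (((hasDerivAt_id y).const_mul β).const_add (α * x)).const_mul x
    have hg : HasDerivAt (fun t : ℝ => β * x + α * t) α y := by
      simpa using ((hasDerivAt_id y).const_mul α).const_add (β * x)
    exact hf.div hg hne
  -- ∂u/∂y
  have h3 : HasDerivAt (fun t => ufun α β x t)
      (((α * x + 2 * β * y) * (β * x + α * y) - y * (α * x + β * y) * α) / (β * x + α * y) ^ 2)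
      y := by
    have hf : HasDerivAt (fun t : ℝ => t * (α * x + β * t)) (α * x + 2 * β * y) y := by
      have := (hasDerivAt_id y).mul (((hasDerivAt_id y).const_mul β).const_add (α * x))
      simp only [id] at this
      refine this.congr_deriv ?_
      ring
    have hg : HasDerivAt (fun t : ℝ => β * x + α * t) α y := by
      simpa using ((hasDerivAt_id y).const_mul α).const_add (β * x)
    exact hf.div hg hne
  -- ∂v/∂x
  have h4 : HasDerivAt (fun t => vfun α β t y)
      (((2 * α * x + β * y) * (β * x + α * y) - x * (α * x + β * y) * β) / (β * x + α * y) ^ 2)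
      x := by
    have hf : HasDerivAt (fun t : ℝ => t * (α * t + β * y)) (2 * α * x + β * y) x := by
      have := (hasDerivAt_id x).mul (((hasDerivAt_id x).const_mul α).add_const (β * y))
      simp only [id] at this
      refine this.congr_deriv ?_
      ring
    have hg : HasDerivAt (fun t : ℝ => β * t + α * y) β x := by
      simpa using ((hasDerivAt_id x).const_mul β).add_const (α * y)
    exact hf.div hg hne
  rw [h1.deriv, h2.deriv, h3.deriv, h4.deriv]
  have hu : ufun α β x y ≠ 0 := by
    unfold ufun; positivity
  have hv : vfun α β x y ≠ 0 := by
    unfold vfun; positivity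
  unfold ufun vfun at *
  field_simp
  ring
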